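/- Let 𝒜̃ be the covering noncrossing algebra of a finite Coxeter group W, with skew-derivations ∇_t and D_t defined on monomials by ∇_t(α_{t₁}⋯α_{t_k}) = Σ_i (−1)^{i−1} δ_{t,t_i} α_{t₁^{t_i}}⋯α_{t_{i−1}^{t_i}} α_{t_{i+1}}⋯α_{t_k} and D_t(α_{t₁}⋯α_{t_k}) = Σ_i (−1)^{k−i} δ_{t, t_i^{t_{i+1}⋯t_k}} α_{t₁}⋯α_{t_{i−1}} α_{t_{i+1}}⋯α_{t_k}. Then for all t, t′ ∈ T one has ∇_t D_{t′} = D_{t′} ∇_t. -/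
import Mathlib
set_option maxHeartbeats 1600000
open scoped Classical

abbrev Refl {B : Type*} {W : Type*} [Group W] {M : CoxeterMatrix B}
    (cs : CoxeterSystem M W) : Type _ := {t : W // cs.IsReflection t}

def conjR {B : Type*} {W : Type*} [Group W] {M : CoxeterMatrix B}
    {cs : CoxeterSystem M W} (s : Refl cs) (u : W) : Refl cs :=
  ⟨u⁻¹ * (s : W) * u, by have := s.2.conj u⁻¹; rwa [inv_inv] at this⟩

noncomputable def mono {B : Type*} {W : Type*} [Group W] {M : CoxeterMatrix B}
    (cs : CoxeterSystem M W) (l : List (Refl cs)) : FreeAlgebra ℂ (Refl cs) :=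
  (l.map (FreeAlgebra.ι ℂ)).prod

lemma coe_conjR {B W : Type*} [Group W] {M : CoxeterMatrix B}
    {cs : CoxeterSystem M W} (s : Refl cs) (u : W) :
    ((conjR s u : Refl cs) : W) = u⁻¹ * (s : W) * u := rfl

lemma listProd_map_conj {B W : Type*} [Group W] {M : CoxeterMatrix B}
    {cs : CoxeterSystem M W} (xs : List (Refl cs)) (u : W) :
    ((xs.map (fun s => conjR s u)).map Subtype.val).prod
      = u⁻¹ * (xs.map Subtype.val).prod * u := by
  induction xs with
  | nil => simp
  | cons x xs ih => simp only [List.map_cons, List.prod_cons, ih, coe_conjR]; group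

lemma conjR_conjR {B W : Type*} [Group W] {M : CoxeterMatrix B}
    {cs : CoxeterSystem M W} (s : Refl cs) (u v : W) :
    conjR (conjR s u) v = conjR s (u * v) := by
  apply Subtype.ext; simp [conjR]; group

lemma mono_append {B W : Type*} [Group W] {M : CoxeterMatrix B}
    (cs : CoxeterSystem M W) (l₁ l₂ : List (Refl cs)) :
    mono cs (l₁ ++ l₂) = mono cs l₁ * mono cs l₂ := by
  simp [mono]

noncomputable def absLen {B : Type*} {W : Type*} [Group W] {M : CoxeterMatrix B}
    (cs : CoxeterSystem M W) (w : W) : ℕ :=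
  sInf {k : ℕ | ∃ l : List W, (∀ t ∈ l, cs.IsReflection t) ∧ l.length = k ∧ l.prod = w}

inductive CoverRel {B : Type*} {W : Type*} [Group W] [Fintype W] {M : CoxeterMatrix B}
    (cs : CoxeterSystem M W) :
    FreeAlgebra ℂ (Refl cs) → FreeAlgebra ℂ (Refl cs) → Prop
  | sq (t : Refl cs) :
      CoverRel cs (FreeAlgebra.ι ℂ t * FreeAlgebra.ι ℂ t) 0
  | sum (w : W) (h : absLen cs w = 2) :
      CoverRel cs
        (∑ p : Refl cs × Refl cs,
          if (p.1 : W) * (p.2 : W) = w then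
            FreeAlgebra.ι ℂ p.1 * FreeAlgebra.ι ℂ p.2 else 0) 0

lemma cover_span {B W : Type*} [Group W] [Fintype W] {M : CoxeterMatrix B}
    (cs : CoxeterSystem M W) :
    Submodule.span ℂ (Set.range fun l : List (Refl cs) =>
      RingQuot.mkAlgHom ℂ (CoverRel cs) (mono cs l)) = ⊤ := by
  set S : Set (RingQuot (CoverRel cs)) := Set.range fun l : List (Refl cs) =>
      RingQuot.mkAlgHom ℂ (CoverRel cs) (mono cs l) with hS
  rw [eq_top_iff]
  rintro x -
  obtain ⟨y, rfl⟩ := RingQuot.mkAlgHom_surjective ℂ (CoverRel cs) x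
  induction y using FreeAlgebra.induction with
  | grade0 r =>
      have h1 : (RingQuot.mkAlgHom ℂ (CoverRel cs)) (algebraMap ℂ _ r)
          = r • RingQuot.mkAlgHom ℂ (CoverRel cs) (mono cs []) := by
        simp [mono, Algebra.algebraMap_eq_smul_one]
      rw [h1]
      exact Submodule.smul_mem _ _ (Submodule.subset_span ⟨[], rfl⟩)
  | grade1 z =>
      have h1 : FreeAlgebra.ι ℂ z = mono cs [z] := by simp [mono]
      rw [h1]; exact Submodule.subset_span ⟨[z], rfl⟩
  | add a b ha hb => rw [map_add]; exact Submodule.add_mem _ ha hb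
  | mul a b ha hb =>
      rw [map_mul]
      have hmul : Submodule.span ℂ S * Submodule.span ℂ S ≤ Submodule.span ℂ S := by
        rw [Submodule.span_mul_span]
        apply Submodule.span_le.2
        rintro _ ⟨u, ⟨l₁, rfl⟩, v, ⟨l₂, rfl⟩, rfl⟩
        apply Submodule.subset_span
        exact ⟨l₁ ++ l₂, by simp [mono_append, map_mul]⟩
      exact hmul (Submodule.mul_mem_mul ha hb)


lemma getElem_idx_congr {α : Type*} {l : List α} {i j : ℕ} (h : i = j) {p : i < l.length} :
    l[i]'p = l[j]'(h ▸ p) := by subst h; rfl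

lemma finmk {n v : ℕ} (h : v < n) : ((⟨v, h⟩ : Fin n) : ℕ) = v := rfl

section
variable {α : Type*} (l : List α) (g : α → α) (iN bN : ℕ)

lemma getE1 (h : iN < bN) (hb : bN < l.length) {hh : iN < (l.eraseIdx bN).length} :
    (l.eraseIdx bN)[iN]'hh = l[iN]'(by omega) := by
  rw [List.getElem_eraseIdx, dif_pos h]

lemma getE2 (h : ¬ iN < bN) (hb : bN < l.length) {hh : iN < (l.eraseIdx bN).length} :
    (l.eraseIdx bN)[iN]'hh = l[iN+1]'(by
      rw [List.length_eraseIdx, if_pos hb] at hh; omega) := by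
  rw [List.getElem_eraseIdx, dif_neg h]

lemma lenLa (h : iN < l.length) :
    ((l.take iN).map g ++ l.drop (iN+1)).length = l.length - 1 := by
  simp [List.length_take]; omega

lemma list1 (h : iN < bN) (hb : bN < l.length) :
    ((l.eraseIdx bN).take iN).map g ++ (l.eraseIdx bN).drop (iN+1)
      = ((l.take iN).map g ++ l.drop (iN+1)).eraseIdx (bN-1) := by
  have hmin : iN ⊓ l.length = iN := Nat.min_eq_left (by omega)
  have hcond : bN - 1 < iN + (l.length - (iN + 1)) := by omega
  apply List.ext_getElem
  · simp [List.length_eraseIdx, List.length_take, hb, hmin, hcond]; omega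
  intro k h1 h2
  simp only [List.length_eraseIdx, List.length_take, List.length_map, List.length_drop,
    List.length_append, hb, hmin, hcond, if_true, List.getElem_append, List.getElem_map,
    List.getElem_take, List.getElem_drop, List.getElem_eraseIdx] at h1 h2 ⊢
  repeat' split
  all_goals
    repeat first
      | rw [dif_pos (show k < bN - 1 from by omega)]
      | rw [dif_neg (show ¬ k < bN - 1 from by omega)]
      | rw [dif_pos (show k < iN from by omega)]
      | rw [dif_neg (show ¬ k < iN from by omega)]
      | rw [dif_pos (show k + 1 < iN from by omega)]
      | rw [dif_neg (show ¬ k + 1 < iN from by omega)]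
  all_goals
    first
      | rfl
      | omega
      | exact getElem_idx_congr (by omega)
      | exact congrArg _ (getElem_idx_congr (by omega))

lemma list2 (h : ¬ iN < bN) (hi : iN+1 < l.length) :
    ((l.eraseIdx bN).take iN).map g ++ (l.eraseIdx bN).drop (iN+1)
      = ((l.take (iN+1)).map g ++ l.drop (iN+1+1)).eraseIdx bN := by
  have hb : bN < l.length := by omega
  have hmin : (iN+1) ⊓ l.length = iN+1 := Nat.min_eq_left (by omega)
  have hcond : bN < (iN+1) + (l.length - (iN+1+1)) := by omega
  apply List.ext_getElem
  · simp [List.length_eraseIdx, List.length_take, hb, hmin, hcond]; omega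
  intro k h1 h2
  simp only [List.length_eraseIdx, List.length_take, List.length_map, List.length_drop,
    List.length_append, hb, hmin, hcond, if_true, List.getElem_append, List.getElem_map,
    List.getElem_take, List.getElem_drop, List.getElem_eraseIdx] at h1 h2 ⊢
  repeat' split
  all_goals
    repeat first
      | rw [dif_pos (show k < bN from by omega)]
      | rw [dif_neg (show ¬ k < bN from by omega)]
      | rw [dif_pos (show k < iN + 1 from by omega)]
      | rw [dif_neg (show ¬ k < iN + 1 from by omega)]
      | rw [dif_pos (show k + 1 < iN + 1 from by omega)]
      | rw [dif_neg (show ¬ k + 1 < iN + 1 from by omega)]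
  all_goals
    first
      | rfl
      | omega
      | exact getElem_idx_congr (by omega)
      | exact congrArg _ (getElem_idx_congr (by omega))

lemma getLa1 (h : iN < bN) (hb : bN < l.length)
    {hh : bN - 1 < ((l.take iN).map g ++ l.drop (iN+1)).length} :
    ((l.take iN).map g ++ l.drop (iN+1))[bN-1]'hh = l[bN]'hb := by
  simp only [List.getElem_append, List.getElem_map, List.getElem_take, List.getElem_drop,
    List.length_map, List.length_take]
  split_ifs <;>
    first
      | omega
      | exact getElem_idx_congr (by omega)
      | exact congrArg _ (getElem_idx_congr (by omega))

lemma dropLa1 (h : iN < bN) (hb : bN < l.length) :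
    ((l.take iN).map g ++ l.drop (iN+1)).drop (bN-1+1) = l.drop (bN+1) := by
  apply List.ext_getElem
  · simp [List.length_take]; omega
  intro k h1 h2
  simp only [List.length_take, List.length_map, List.length_drop, List.length_append,
    List.getElem_append, List.getElem_map, List.getElem_take, List.getElem_drop] at h1 h2 ⊢
  split_ifs <;>
    first
      | omega
      | exact getElem_idx_congr (by omega)
      | exact congrArg _ (getElem_idx_congr (by omega))

lemma getLa2 (h : bN ≤ iN) (hi : iN+1 < l.length)
    {hh : bN < ((l.take (iN+1)).map g ++ l.drop (iN+1+1)).length} :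
    ((l.take (iN+1)).map g ++ l.drop (iN+1+1))[bN]'hh
      = g (l[bN]'(by omega)) := by
  simp only [List.getElem_append, List.getElem_map, List.getElem_take, List.getElem_drop,
    List.length_map, List.length_take]
  split_ifs <;>
    first
      | omega
      | exact getElem_idx_congr (by omega)
      | exact congrArg _ (getElem_idx_congr (by omega))

lemma dropLa2 (h : bN ≤ iN) (hi : iN+1 ≤ l.length) :
    ((l.take (iN+1)).map g ++ l.drop (iN+1+1)).drop (bN+1)
      = ((l.take (iN+1)).drop (bN+1)).map g ++ l.drop (iN+1+1) := by
  apply List.ext_getElem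
  · simp [List.length_take]; omega
  intro k h1 h2
  simp only [List.length_take, List.length_map, List.length_drop, List.length_append,
    List.getElem_append, List.getElem_map, List.getElem_take, List.getElem_drop] at h1 h2 ⊢
  split_ifs <;>
    first
      | omega
      | rfl
      | exact getElem_idx_congr (by omega)
      | exact congrArg _ (getElem_idx_congr (by omega))

lemma lsplit (h : bN ≤ iN) (hi : iN+1 < l.length) :
    l.drop (bN+1) = (l.take (iN+1)).drop (bN+1) ++ (l[iN+1]'hi :: l.drop (iN+1+1)) := by
  apply List.ext_getElem
  · simp [List.length_take]; omega
  intro k h1 h2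
  simp only [List.length_take, List.length_map, List.length_drop, List.length_append,
    List.length_cons, List.getElem_append, List.getElem_map, List.getElem_take,
    List.getElem_drop, List.getElem_cons] at h1 h2 ⊢
  split_ifs <;>
    first
      | omega
      | rfl
      | exact getElem_idx_congr (by omega)
      | exact congrArg _ (getElem_idx_congr (by omega))
end

/-- Let `𝒜̃` be the covering noncrossing algebra of a finite Coxeter
group `W`, with skew-derivations `∇_t` and `D_t` defined on monomials by the formulae
`∇_t(α_{t₁}⋯α_{t_k}) = Σ_i (−1)^{i−1} δ_{t,t_i} α_{t₁^{t_i}}⋯α_{t_{i−1}^{t_i}}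
α_{t_{i+1}}⋯α_{t_k}` and
`D_t(α_{t₁}⋯α_{t_k}) = Σ_i (−1)^{k−i} δ_{t, t_i^{t_{i+1}⋯t_k}}
α_{t₁}⋯α_{t_{i−1}} α_{t_{i+1}}⋯α_{t_k}`.
Then for all reflections `t, t′` one has `∇_t D_{t′} = D_{t′} ∇_t`. -/
theorem cover_nabla_comm_D (B : Type*) (W : Type*) [Group W] [Fintype W]
    (M : CoxeterMatrix B) (cs : CoxeterSystem M W)
    (nabla D : Refl cs → (RingQuot (CoverRel cs) →ₗ[ℂ] RingQuot (CoverRel cs)))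
    (hnabla : ∀ (t : Refl cs) (l : List (Refl cs)),
      nabla t (RingQuot.mkAlgHom ℂ (CoverRel cs) (mono cs l)) =
        ∑ i : Fin l.length, ((-1 : ℂ) ^ (i : ℕ)) •
          (if t = l.get i then
            RingQuot.mkAlgHom ℂ (CoverRel cs)
              (mono cs ((l.take (i : ℕ)).map (fun s => conjR s (l.get i : W))
                ++ l.drop ((i : ℕ) + 1)))
          else 0))
    (hD : ∀ (t : Refl cs) (l : List (Refl cs)),
      D t (RingQuot.mkAlgHom ℂ (CoverRel cs) (mono cs l)) =
        ∑ i : Fin l.length, ((-1 : ℂ) ^ (l.length - 1 - (i : ℕ))) •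
          (if t = conjR (l.get i) (((l.drop ((i : ℕ) + 1)).map Subtype.val).prod) then
            RingQuot.mkAlgHom ℂ (CoverRel cs) (mono cs (l.eraseIdx (i : ℕ)))
          else 0)) :
    ∀ t t' : Refl cs, nabla t ∘ₗ D t' = D t' ∘ₗ nabla t := by
  intro t t'
  apply LinearMap.ext_on (cover_span cs)
  rintro x ⟨l, rfl⟩
  simp only [LinearMap.coe_comp, Function.comp_apply]
  have expandL :
      nabla t (D t' (RingQuot.mkAlgHom ℂ (CoverRel cs) (mono cs l)))
      = ∑ b : Fin l.length, ∑ i : Fin ((l.eraseIdx (b : ℕ)).length),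
          (if t = (l.eraseIdx (b : ℕ)).get i
              ∧ t' = conjR (l.get b) (((l.drop ((b : ℕ) + 1)).map Subtype.val).prod)
            then (((-1 : ℂ) ^ (l.length - 1 - (b : ℕ))) * ((-1 : ℂ) ^ (i : ℕ))) •
              RingQuot.mkAlgHom ℂ (CoverRel cs) (mono cs
                (((l.eraseIdx (b : ℕ)).take (i : ℕ)).map
                    (fun s => conjR s ((l.eraseIdx (b : ℕ)).get i : W))
                  ++ (l.eraseIdx (b : ℕ)).drop ((i : ℕ) + 1)))
            else 0) := by
    rw [hD, map_sum]
    refine Finset.sum_congr rfl fun b _ => ?_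
    rw [map_smul, apply_ite (nabla t), map_zero, hnabla]
    by_cases hc : t' = conjR (l.get b) (((l.drop ((b : ℕ) + 1)).map Subtype.val).prod)
    · rw [if_pos hc, Finset.smul_sum]
      refine Finset.sum_congr rfl fun i _ => ?_
      by_cases hn : t = (l.eraseIdx (b : ℕ)).get i
      · rw [if_pos hn, if_pos ⟨hn, hc⟩, smul_smul]
      · rw [if_neg hn, if_neg (by tauto)]; simp
    · rw [if_neg hc, smul_zero]
      exact (Finset.sum_eq_zero fun i _ => by rw [if_neg (by tauto)]).symm
  have expandR :
      D t' (nabla t (RingQuot.mkAlgHom ℂ (CoverRel cs) (mono cs l)))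
      = ∑ a : Fin l.length,
          ∑ j : Fin (((l.take (a : ℕ)).map (fun s => conjR s (l.get a : W))
              ++ l.drop ((a : ℕ) + 1)).length),
          (if t = l.get a
              ∧ t' = conjR (((l.take (a : ℕ)).map (fun s => conjR s (l.get a : W))
                  ++ l.drop ((a : ℕ) + 1)).get j)
                (((((l.take (a : ℕ)).map (fun s => conjR s (l.get a : W))
                  ++ l.drop ((a : ℕ) + 1)).drop ((j : ℕ) + 1)).map Subtype.val).prod)
            then (((-1 : ℂ) ^ (a : ℕ)) * ((-1 : ℂ) ^
                (((l.take (a : ℕ)).map (fun s => conjR s (l.get a : W))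
                  ++ l.drop ((a : ℕ) + 1)).length - 1 - (j : ℕ)))) •
              RingQuot.mkAlgHom ℂ (CoverRel cs) (mono cs
                (((l.take (a : ℕ)).map (fun s => conjR s (l.get a : W))
                  ++ l.drop ((a : ℕ) + 1)).eraseIdx (j : ℕ)))
            else 0) := by
    rw [hnabla, map_sum]
    refine Finset.sum_congr rfl fun a _ => ?_
    rw [map_smul, apply_ite (D t'), map_zero, hD]
    by_cases hn : t = l.get a
    · rw [if_pos hn, Finset.smul_sum]
      refine Finset.sum_congr rfl fun j _ => ?_
      by_cases hc : t' = conjR (((l.take (a : ℕ)).map (fun s => conjR s (l.get a : W))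
                  ++ l.drop ((a : ℕ) + 1)).get j)
                (((((l.take (a : ℕ)).map (fun s => conjR s (l.get a : W))
                  ++ l.drop ((a : ℕ) + 1)).drop ((j : ℕ) + 1)).map Subtype.val).prod)
      · rw [if_pos hc, if_pos ⟨hn, hc⟩, smul_smul]
      · rw [if_neg hc, if_neg (by tauto)]; simp
    · rw [if_neg hn, smul_zero]
      exact (Finset.sum_eq_zero fun j _ => by rw [if_neg (by tauto)]).symm
  rw [expandL, expandR]
  have hE : ∀ bN : ℕ, bN < l.length → (l.eraseIdx bN).length = l.length - 1 := by
    intro bN hbn; rw [List.length_eraseIdx, if_pos hbn]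
  have hLa : ∀ a : Fin l.length,
      (((l.take (a : ℕ)).map fun s => conjR s (l.get a : W)) ++ l.drop ((a : ℕ) + 1)).length
        = l.length - 1 := by
    intro a; have := a.isLt; simp [List.length_take]; omega
  rw [Finset.sum_sigma', Finset.sum_sigma']
  refine Finset.sum_bij'
    (fun x _ =>
      if h : (x.2 : ℕ) < (x.1 : ℕ) then
        ⟨⟨(x.2 : ℕ), by have hb := x.1.isLt; omega⟩,
         ⟨(x.1 : ℕ) - 1, by
            rw [hLa]; have hb := x.1.isLt; have h2 := x.2.isLt; omega⟩⟩
      else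
        ⟨⟨(x.2 : ℕ) + 1, by
            have h2 := lt_of_lt_of_le x.2.isLt (le_of_eq (hE _ x.1.isLt)); omega⟩,
         ⟨(x.1 : ℕ), by
            rw [hLa]
            have h2 := lt_of_lt_of_le x.2.isLt (le_of_eq (hE _ x.1.isLt))
            have hb := x.1.isLt; omega⟩⟩)
    (fun x _ =>
      if h : (x.2 : ℕ) < (x.1 : ℕ) then
        ⟨⟨(x.2 : ℕ), by have hb := x.1.isLt; omega⟩,
         ⟨(x.1 : ℕ) - 1, by
            have hb := x.1.isLt
            rw [hE _ (show (x.2 : ℕ) < l.length by omega)]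
            omega⟩⟩
      else
        ⟨⟨(x.2 : ℕ) + 1, by
            have h2 := lt_of_lt_of_le x.2.isLt (le_of_eq (hLa x.1))
            have hb := x.1.isLt; omega⟩,
         ⟨(x.1 : ℕ), by
            have h2 := lt_of_lt_of_le x.2.isLt (le_of_eq (hLa x.1))
            have hb := x.1.isLt
            rw [hE _ (show (x.2 : ℕ) + 1 < l.length by omega)]
            omega⟩⟩)
    (fun x _ => by simp)
    (fun x _ => by simp)
    (fun x _ => ?_) (fun x _ => ?_) (fun x _ => ?_)
  · -- left inverse
    rcases x with ⟨b, i⟩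
    have hb := b.isLt
    have hi := lt_of_lt_of_le i.isLt (le_of_eq (hE _ hb))
    dsimp only
    by_cases h : (i : ℕ) < (b : ℕ)
    · rw [dif_pos h, dif_neg (show ¬ ((b:ℕ) - 1 < (i:ℕ)) by omega)]
      refine Sigma.ext (Fin.ext (show (b:ℕ) - 1 + 1 = (b:ℕ) by omega)) ?_
      exact (Fin.heq_ext_iff (by rw [hE _ (show (b:ℕ)-1+1 < l.length by omega), hE _ hb])).mpr rfl
    · rw [dif_neg h, dif_pos (show (b:ℕ) < (i:ℕ) + 1 by omega)]
      refine Sigma.ext (Fin.ext rfl) ?_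
      exact (Fin.heq_ext_iff (by rw [hE _ hb])).mpr (show (i:ℕ)+1-1 = (i:ℕ) by omega)
  · -- right inverse
    rcases x with ⟨a, j⟩
    have ha := a.isLt
    have hj := lt_of_lt_of_le j.isLt (le_of_eq (hLa a))
    dsimp only
    by_cases h : (j : ℕ) < (a : ℕ)
    · rw [dif_pos h, dif_neg (show ¬ ((a:ℕ) - 1 < (j:ℕ)) by omega)]
      refine Sigma.ext (Fin.ext (show (a:ℕ) - 1 + 1 = (a:ℕ) by omega)) ?_
      exact (Fin.heq_ext_iff (by simp only [hLa])).mpr rfl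
    · rw [dif_neg h, dif_pos (show (a:ℕ) < (j:ℕ) + 1 by omega)]
      refine Sigma.ext (Fin.ext rfl) ?_
      exact (Fin.heq_ext_iff (by simp only [hLa])).mpr (show (j:ℕ)+1-1 = (j:ℕ) by omega)
  · -- main term equality
    rcases x with ⟨b, i⟩
    have hb := b.isLt
    have hi := lt_of_lt_of_le i.isLt (le_of_eq (hE _ hb))
    dsimp only
    simp only [List.get_eq_getElem, finmk]
    by_cases h : (i : ℕ) < (b : ℕ)
    · rw [dif_pos h]
      simp only [List.get_eq_getElem, finmk]
      simp only [getE1 l (i:ℕ) (b:ℕ) h hb]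
      simp only [getLa1 l _ (i:ℕ) (b:ℕ) h hb]
      rw [dropLa1 l _ (i:ℕ) (b:ℕ) h hb]
      rw [list1 l _ (i:ℕ) (b:ℕ) h hb]
      rw [show ((-1 : ℂ) ^ (l.length - 1 - (b:ℕ)) * (-1 : ℂ) ^ (i:ℕ))
          = ((-1 : ℂ) ^ (i:ℕ) * (-1 : ℂ) ^
              (((l.take (i:ℕ)).map (fun s => conjR s ((l[(i:ℕ)]'(by omega) : Refl cs) : W))
                ++ l.drop ((i:ℕ)+1)).length - 1 - ((b:ℕ) - 1))) from by
        rw [lenLa l _ (i:ℕ) (by omega), mul_comm]; congr 2 <;> omega]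
      try rfl
    · rw [dif_neg h]
      simp only [List.get_eq_getElem, finmk]
      simp only [getE2 l (i:ℕ) (b:ℕ) h hb]
      simp only [getLa2 l _ (i:ℕ) (b:ℕ) (by omega) (by omega)]
      rw [dropLa2 l _ (i:ℕ) (b:ℕ) (by omega) (by omega)]
      rw [list2 l _ (i:ℕ) (b:ℕ) h (by omega)]
      rw [show ((-1 : ℂ) ^ (l.length - 1 - (b:ℕ)) * (-1 : ℂ) ^ (i:ℕ))
          = ((-1 : ℂ) ^ ((i:ℕ)+1) * (-1 : ℂ) ^
              (((l.take ((i:ℕ)+1)).map (fun s => conjR s ((l[(i:ℕ)+1]'(by omega) : Refl cs) : W))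
                ++ l.drop ((i:ℕ)+1+1)).length - 1 - (b:ℕ))) from by
        rw [lenLa l _ ((i:ℕ)+1) (by omega), ← pow_add, ← pow_add]
        exact congrArg (fun k : ℕ => (-1:ℂ)^k) (by omega)]
      have hBB : conjR (l[(b:ℕ)]'hb) ((List.map Subtype.val (l.drop ((b:ℕ)+1))).prod)
          = conjR (conjR (l[(b:ℕ)]'hb) ((l[(i:ℕ)+1]'(by omega) : Refl cs) : W))
              ((List.map Subtype.val
                (((l.take ((i:ℕ)+1)).drop ((b:ℕ)+1)).map
                    (fun s => conjR s ((l[(i:ℕ)+1]'(by omega) : Refl cs) : W))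
                  ++ l.drop ((i:ℕ)+1+1))).prod) := by
        rw [conjR_conjR]
        apply congrArg
        rw [List.map_append, List.prod_append, listProd_map_conj]
        conv_lhs => rw [lsplit l (i:ℕ) (b:ℕ) (by omega) (by omega)]
        rw [List.map_append, List.prod_append, List.map_cons, List.prod_cons]
        group
      rw [hBB]
      try rfl
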